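/- Let (α_{ij}) be a real symmetric 3×3 matrix and (β_{ijk}) a totally symmetric 3-tensor on ℝ³. Define R_{ijkl} = α_{ik}α_{jl} − α_{il}α_{jk} and S_{ijklm} = β_{ikm}α_{jl} + α_{ik}β_{jlm} − β_{ilm}α_{jk} − α_{il}β_{jkm}. Then r₆ := (R_{1313}R_{2323} − R_{1323}²)S_{12232} − (R_{1213}R_{2323} − R_{1223}R_{1323})S_{12233} − (R_{1213}R_{2323} − R_{1223}R_{1323})S_{13232} + (R_{1212}R_{2323} − R_{1223}²)S_{13233} + (R_{1213}R_{1323} − R_{1223}R_{1313})S_{23232} − (R_{1212}R_{1323} − R_{1213}R_{1223})S_{23233} = 0. -/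
import Mathlib


open Matrix

set_option maxHeartbeats 1000000 in
theorem rivertz_r6_vanishes (A : Matrix (Fin 3) (Fin 3) ℝ) (hA : A.IsSymm)
    (β : Fin 3 → Fin 3 → Fin 3 → ℝ)
    (hβ1 : ∀ i j k, β i j k = β j i k)
    (hβ2 : ∀ i j k, β i j k = β i k j)
    (R : Fin 3 → Fin 3 → Fin 3 → Fin 3 → ℝ)
    (hR : ∀ i j k l, R i j k l = A i k * A j l - A i l * A j k)
    (S : Fin 3 → Fin 3 → Fin 3 → Fin 3 → Fin 3 → ℝ)
    (hS : ∀ i j k l m, S i j k l m =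
      β i k m * A j l + A i k * β j l m - β i l m * A j k - A i l * β j k m) :
    (R 0 2 0 2 * R 1 2 1 2 - R 0 2 1 2 ^ 2) * S 0 1 1 2 1
    - (R 0 1 0 2 * R 1 2 1 2 - R 0 1 1 2 * R 0 2 1 2) * S 0 1 1 2 2
    - (R 0 1 0 2 * R 1 2 1 2 - R 0 1 1 2 * R 0 2 1 2) * S 0 2 1 2 1
    + (R 0 1 0 1 * R 1 2 1 2 - R 0 1 1 2 ^ 2) * S 0 2 1 2 2
    + (R 0 1 0 2 * R 0 2 1 2 - R 0 1 1 2 * R 0 2 0 2) * S 1 2 1 2 1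
    - (R 0 1 0 1 * R 0 2 1 2 - R 0 1 0 2 * R 0 1 1 2) * S 1 2 1 2 2 = 0 := by
  have e1 : β 2 2 1 = β 1 2 2 := by rw [hβ2 2 2 1, hβ1 2 1 2]
  have e2 : β 2 1 1 = β 1 1 2 := by rw [hβ1 2 1 1, hβ2 1 2 1]
  have e3 : β 2 1 2 = β 1 2 2 := hβ1 2 1 2
  have e4 : β 0 2 1 = β 0 1 2 := hβ2 0 2 1
  have e5 : β 1 2 1 = β 1 1 2 := hβ2 1 2 1
  have h02 : A 0 2 = A 2 0 := (hA.apply 2 0)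
  have h01 : A 0 1 = A 1 0 := (hA.apply 1 0)
  have h12 : A 1 2 = A 2 1 := (hA.apply 2 1)
  simp only [hR, hS, e1, e2, e3, e4, e5, h02, h01, h12]
  ring
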